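/- Let m ∈ ℂ and define for τ, b > 0 and r ∈ ℝ with |((τ−b)²−r²)/((τ+b+2)²−r²)| < 1 the function E(r,τ;b;m) := 2^{2im}(1+b)^{2im}((τ+b+2)² − r²)^{−im} F(im, im; 1; ((τ−b)² − r²)/((τ+b+2)² − r²)). Then E satisfies the generalized Euler–Poisson–Darboux equation in the variables (r,τ): ∂²_τ E − ∂²_r E + (2im/(τ+1)) ∂_τ E = 0. -/

import Mathlib

noncomputable section
open Complex

/-- The kernel E(r,τ;b;m), principal powers, with an abstract hypergeometric F. -/
def Eker (F : ℂ → ℂ → ℂ → ℂ → ℂ) (m : ℂ) (b : ℝ) (r τ : ℝ) : ℂ :=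
  (2 : ℂ) ^ (2 * I * m) * ((1 + b : ℝ) : ℂ) ^ (2 * I * m)
    * ((((τ + b + 2) ^ 2 - r ^ 2 : ℝ)) : ℂ) ^ (-(I * m))
    * F (I * m) (I * m) 1
        ((((τ - b) ^ 2 - r ^ 2) / ((τ + b + 2) ^ 2 - r ^ 2) : ℝ) : ℂ)

set_option maxHeartbeats 2000000 in
private lemma aux1 (c a : ℂ) (f f' : ℂ → ℂ) (g h : ℝ → ℝ) (gd hd : ℝ) (t : ℝ)
    (hg : HasDerivAt g gd t) (hh : HasDerivAt h hd t)
    (hf : HasDerivAt f (f' ((h t / g t : ℝ) : ℂ)) ((h t / g t : ℝ) : ℂ))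
    (hgpos : 0 < g t) :
    HasDerivAt (fun s : ℝ => c * (((g s : ℝ) : ℂ) ^ (-a) * f ((h s / g s : ℝ) : ℂ)))
      (c * ((g t : ℝ) : ℂ) ^ (-a)
        * ((-a) * ((gd : ℝ) : ℂ) * ((g t : ℝ) : ℂ) * f ((h t / g t : ℝ) : ℂ)
          + ((hd * g t - h t * gd : ℝ) : ℂ) * f' ((h t / g t : ℝ) : ℂ))
        / ((g t : ℝ) : ℂ) ^ 2) t := by
  have hgne : ((g t : ℝ) : ℂ) ≠ 0 := Complex.ofReal_ne_zero.mpr hgpos.ne'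
  have h1 : HasDerivAt (fun s : ℝ => ((g s : ℝ) : ℂ) ^ (-a))
      ((-a) * ((g t : ℝ) : ℂ) ^ (-a - 1) * ((gd : ℝ) : ℂ)) t := by
    have h0 := HasDerivAt.scomp (g₁ := fun z : ℂ => z ^ (-a))
      (h := fun s : ℝ => ((g s : ℝ) : ℂ)) t
      ((Complex.hasStrictDerivAt_cpow_const
        (Complex.ofReal_mem_slitPlane.2 hgpos)).hasDerivAt) hg.ofReal_comp
    simp only [Function.comp_def] at h0
    refine h0.congr_deriv ?_
    rw [smul_eq_mul]
    ring
  have hz1c : HasDerivAt (fun s : ℝ => ((h s / g s : ℝ) : ℂ))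
      ((((hd * g t - h t * gd) / g t ^ 2 : ℝ)) : ℂ) t := (hh.div hg hgpos.ne').ofReal_comp
  have h2 : HasDerivAt (fun s : ℝ => f ((h s / g s : ℝ) : ℂ))
      ((((hd * g t - h t * gd) / g t ^ 2 : ℝ) : ℂ) * f' ((h t / g t : ℝ) : ℂ)) t := by
    have h0 := HasDerivAt.scomp (g₁ := f)
      (h := fun s : ℝ => ((h s / g s : ℝ) : ℂ)) t hf hz1c
    simp only [Function.comp_def] at h0
    simpa [smul_eq_mul] using h0
  have h3 := (h1.mul h2).const_mul c
  have ec : ((g t : ℝ) : ℂ) ^ (-a - 1) = ((g t : ℝ) : ℂ) ^ (-a) * ((g t : ℝ) : ℂ)⁻¹ := by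
    rw [show -a - 1 = -a + (-1) by ring, Complex.cpow_add _ _ hgne, Complex.cpow_neg_one]
  refine h3.congr_deriv ?_
  rw [ec]
  push_cast
  field_simp

set_option maxHeartbeats 2000000 in
private lemma aux2 (c a : ℂ) (f f' f'' : ℂ → ℂ) (g h g' h' : ℝ → ℝ) (gdd hdd : ℝ) (t : ℝ)
    (hg : HasDerivAt g (g' t) t) (hh : HasDerivAt h (h' t) t)
    (hg' : HasDerivAt g' gdd t) (hh' : HasDerivAt h' hdd t)
    (hf : HasDerivAt f (f' ((h t / g t : ℝ) : ℂ)) ((h t / g t : ℝ) : ℂ))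
    (hf' : HasDerivAt f' (f'' ((h t / g t : ℝ) : ℂ)) ((h t / g t : ℝ) : ℂ))
    (hgpos : 0 < g t) :
    HasDerivAt (fun s : ℝ => c * ((g s : ℝ) : ℂ) ^ (-a)
        * ((-a) * ((g' s : ℝ) : ℂ) * ((g s : ℝ) : ℂ) * f ((h s / g s : ℝ) : ℂ)
          + ((h' s * g s - h s * g' s : ℝ) : ℂ) * f' ((h s / g s : ℝ) : ℂ))
        / ((g s : ℝ) : ℂ) ^ 2)
      (c * ((g t : ℝ) : ℂ) ^ (-a)
        * ((a * (a + 1) * ((g' t : ℝ) : ℂ) * ((g' t : ℝ) : ℂ) * ((g t : ℝ) : ℂ) ^ 2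
              - a * ((gdd : ℝ) : ℂ) * ((g t : ℝ) : ℂ) ^ 3) * f ((h t / g t : ℝ) : ℂ)
          + ((((hdd * g t - h t * gdd) * g t - 2 * g' t * (h' t * g t - h t * g' t) : ℝ) : ℂ)
                * ((g t : ℝ) : ℂ)
              - 2 * a * ((g' t : ℝ) : ℂ) * ((h' t * g t - h t * g' t : ℝ) : ℂ)
                * ((g t : ℝ) : ℂ)) * f' ((h t / g t : ℝ) : ℂ)
          + ((h' t * g t - h t * g' t : ℝ) : ℂ) * ((h' t * g t - h t * g' t : ℝ) : ℂ)
              * f'' ((h t / g t : ℝ) : ℂ))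
        / ((g t : ℝ) : ℂ) ^ 4) t := by
  have hgne : g t ≠ 0 := hgpos.ne'
  have hgnec : ((g t : ℝ) : ℂ) ≠ 0 := Complex.ofReal_ne_zero.mpr hgne
  have hz1c : HasDerivAt (fun s : ℝ => ((h s / g s : ℝ) : ℂ))
      ((((h' t * g t - h t * g' t) / g t ^ 2 : ℝ)) : ℂ) t := (hh.div hg hgne).ofReal_comp
  have hXfun : HasDerivAt (fun s : ℝ => f ((h s / g s : ℝ) : ℂ))
      ((((h' t * g t - h t * g' t) / g t ^ 2 : ℝ) : ℂ) * f' ((h t / g t : ℝ) : ℂ)) t := by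
    have h0 := HasDerivAt.scomp (g₁ := f)
      (h := fun s : ℝ => ((h s / g s : ℝ) : ℂ)) t hf hz1c
    simp only [Function.comp_def] at h0
    simpa [smul_eq_mul] using h0
  have hYfun : HasDerivAt (fun s : ℝ => f' ((h s / g s : ℝ) : ℂ))
      ((((h' t * g t - h t * g' t) / g t ^ 2 : ℝ) : ℂ) * f'' ((h t / g t : ℝ) : ℂ)) t := by
    have h0 := HasDerivAt.scomp (g₁ := f')
      (h := fun s : ℝ => ((h s / g s : ℝ) : ℂ)) t hf' hz1c
    simp only [Function.comp_def] at h0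
    simpa [smul_eq_mul] using h0
  have hcpow1 : HasDerivAt (fun s : ℝ => ((g s : ℝ) : ℂ) ^ (-a))
      ((-a) * ((g t : ℝ) : ℂ) ^ (-a - 1) * ((g' t : ℝ) : ℂ)) t := by
    have h0 := HasDerivAt.scomp (g₁ := fun z : ℂ => z ^ (-a))
      (h := fun s : ℝ => ((g s : ℝ) : ℂ)) t
      ((Complex.hasStrictDerivAt_cpow_const
        (Complex.ofReal_mem_slitPlane.2 hgpos)).hasDerivAt) hg.ofReal_comp
    simp only [Function.comp_def] at h0
    refine h0.congr_deriv ?_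
    rw [smul_eq_mul]
    ring
  have hn1 : HasDerivAt (fun s : ℝ => (-a) * ((g' s : ℝ) : ℂ) * ((g s : ℝ) : ℂ))
      (((-a) * ((gdd : ℝ) : ℂ)) * ((g t : ℝ) : ℂ)
        + ((-a) * ((g' t : ℝ) : ℂ)) * ((g' t : ℝ) : ℂ)) t :=
    (hg'.ofReal_comp.const_mul (-a)).mul hg.ofReal_comp
  have hn1f := hn1.mul hXfun
  have hn2 : HasDerivAt (fun s : ℝ => ((h' s * g s - h s * g' s : ℝ) : ℂ))
      (((hdd * g t + h' t * g' t) - (h' t * g' t + h t * gdd) : ℝ) : ℂ) t :=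
    ((hh'.mul hg).sub (hh.mul hg')).ofReal_comp
  have hn2f := hn2.mul hYfun
  have hNum := hn1f.add hn2f
  have hDen : HasDerivAt (fun s : ℝ => ((g s : ℝ) : ℂ) ^ 2)
      (2 * ((g t : ℝ) : ℂ) * ((g' t : ℝ) : ℂ)) t := by
    have h0 := hg.ofReal_comp.mul hg.ofReal_comp
    have hfn : (fun s : ℝ => ((g s : ℝ) : ℂ) ^ 2)
        = fun s : ℝ => ((g s : ℝ) : ℂ) * ((g s : ℝ) : ℂ) := funext fun s => pow_two _
    rw [hfn]
    refine h0.congr_deriv ?_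
    ring
  have hraw := ((hcpow1.const_mul c).mul hNum).div hDen (pow_ne_zero 2 hgnec)
  have ec : ((g t : ℝ) : ℂ) ^ (-a - 1) = ((g t : ℝ) : ℂ) ^ (-a) * ((g t : ℝ) : ℂ)⁻¹ := by
    rw [show -a - 1 = -a + (-1) by ring, Complex.cpow_add _ _ hgnec, Complex.cpow_neg_one]
  refine hraw.congr_deriv ?_
  simp only [Pi.mul_apply, Pi.add_apply]
  rw [ec]
  push_cast
  field_simp
  ring

private lemma frac_combine (cc gp iu mu T A x y z a1 a2 a3 b1 b2 b3 m1 m2 : ℂ)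
    (hA : A ≠ 0) (hT : T ≠ 0) :
    cc * gp * (a1 * x + a2 * y + a3 * z) / A ^ 4
      - cc * gp * (b1 * x + b2 * y + b3 * z) / A ^ 4
      + 2 * iu * mu / T * (cc * gp * (m1 * x + m2 * y) / A ^ 2)
    = cc * gp * ((T * (a1 - b1) + 2 * iu * mu * A ^ 2 * m1) * x
        + (T * (a2 - b2) + 2 * iu * mu * A ^ 2 * m2) * y
        + T * (a3 - b3) * z) / (A ^ 4 * T) := by
  field_simp
  ring

set_option maxHeartbeats 4000000 in
/-- The kernel E satisfies the generalized Euler–Poisson–Darboux equation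
∂²_τ E − ∂²_r E + (2im/(τ+1)) ∂_τ E = 0, where F is a Gauss hypergeometric
function: analytic on the unit disc and satisfying the hypergeometric ODE
z(1−z)F'' + (c−(a+b+1)z)F' − abF = 0. -/
theorem E_solves_EPD
    (F : ℂ → ℂ → ℂ → ℂ → ℂ)
    (hFanalytic : ∀ a b c : ℂ, DifferentiableOn ℂ (F a b c) (Metric.ball 0 1))
    (hFode : ∀ a b c z : ℂ, z ∈ Metric.ball (0 : ℂ) 1 →
      z * (1 - z) * deriv (deriv (F a b c)) z
        + (c - (a + b + 1) * z) * deriv (F a b c) z - a * b * F a b c z = 0)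
    (m : ℂ) (b : ℝ) (hb : 0 < b) (r τ : ℝ) (hτ : 0 < τ)
    (hpos : 0 < (τ + b + 2) ^ 2 - r ^ 2)
    (hdom : |((τ - b) ^ 2 - r ^ 2) / ((τ + b + 2) ^ 2 - r ^ 2)| < 1) :
    deriv (fun τ' : ℝ => deriv (fun τ'' : ℝ => Eker F m b r τ'') τ') τ
      - deriv (fun r' : ℝ => deriv (fun r'' : ℝ => Eker F m b r'' τ) r') r
      + (2 * I * m / ((τ : ℂ) + 1)) * deriv (fun τ' : ℝ => Eker F m b r τ') τ = 0 := by
  have hball : ∀ u v : ℝ, 0 < v → |u| < v → ((u / v : ℝ) : ℂ) ∈ Metric.ball (0 : ℂ) 1 := by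
    intro u v hv hu
    rw [Metric.mem_ball, dist_zero_right, Complex.norm_real, Real.norm_eq_abs, abs_div,
      abs_of_pos hv]
    exact (div_lt_one hv).mpr hu
  have habs : |(τ - b) ^ 2 - r ^ 2| < (τ + b + 2) ^ 2 - r ^ 2 := by
    rw [abs_div, abs_of_pos hpos] at hdom
    exact (div_lt_one hpos).mp hdom
  have hF1at : ∀ z ∈ Metric.ball (0 : ℂ) 1,
      HasDerivAt (F (I * m) (I * m) 1) (deriv (F (I * m) (I * m) 1) z) z := fun z hz =>
    (((hFanalytic (I * m) (I * m) 1)).differentiableAt (Metric.isOpen_ball.mem_nhds hz)).hasDerivAt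
  have hF2at : ∀ z ∈ Metric.ball (0 : ℂ) 1,
      HasDerivAt (deriv (F (I * m) (I * m) 1)) (deriv (deriv (F (I * m) (I * m) 1)) z) z := fun z hz =>
    ((((hFanalytic (I * m) (I * m) 1)).analyticOnNhd Metric.isOpen_ball).deriv z
      hz).differentiableAt.hasDerivAt
  have hgτ : ∀ t : ℝ, HasDerivAt (fun s : ℝ => (s + b + 2) ^ 2 - r ^ 2) (2 * (t + b + 2)) t := by
    intro t
    have h0 := ((((hasDerivAt_id t).add_const b).add_const 2).pow 2).sub_const (r ^ 2)
    refine h0.congr_deriv ?_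
    norm_num
  have hhτ : ∀ t : ℝ, HasDerivAt (fun s : ℝ => (s - b) ^ 2 - r ^ 2) (2 * (t - b)) t := by
    intro t
    have h0 := (((hasDerivAt_id t).sub_const b).pow 2).sub_const (r ^ 2)
    refine h0.congr_deriv ?_
    norm_num
  have hgτ' : ∀ t : ℝ, HasDerivAt (fun s : ℝ => 2 * (s + b + 2)) 2 t := by
    intro t
    have h0 := (((hasDerivAt_id t).add_const b).add_const 2).const_mul 2
    refine h0.congr_deriv ?_
    norm_num
  have hhτ' : ∀ t : ℝ, HasDerivAt (fun s : ℝ => 2 * (s - b)) 2 t := by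
    intro t
    have h0 := ((hasDerivAt_id t).sub_const b).const_mul 2
    refine h0.congr_deriv ?_
    norm_num
  have hgr : ∀ x : ℝ, HasDerivAt (fun s : ℝ => (τ + b + 2) ^ 2 - s ^ 2) (-(2 * x)) x := by
    intro x
    have h0 := ((hasDerivAt_id x).pow 2).const_sub ((τ + b + 2) ^ 2)
    refine h0.congr_deriv ?_
    norm_num
  have hhr : ∀ x : ℝ, HasDerivAt (fun s : ℝ => (τ - b) ^ 2 - s ^ 2) (-(2 * x)) x := by
    intro x
    have h0 := ((hasDerivAt_id x).pow 2).const_sub ((τ - b) ^ 2)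
    refine h0.congr_deriv ?_
    norm_num
  have hgr' : ∀ x : ℝ, HasDerivAt (fun s : ℝ => -(2 * s)) (-2) x := by
    intro x
    have h0 := ((hasDerivAt_id x).const_mul 2).neg
    refine h0.congr_deriv ?_
    norm_num
  have hc1 : Continuous fun t : ℝ => (t + b + 2) ^ 2 - r ^ 2 := by fun_prop
  have hc2 : Continuous fun t : ℝ => (t - b) ^ 2 - r ^ 2 := by fun_prop
  have hc3 : Continuous fun x : ℝ => (τ + b + 2) ^ 2 - x ^ 2 := by fun_prop
  have hc4 : Continuous fun x : ℝ => (τ - b) ^ 2 - x ^ 2 := by fun_prop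
  have hEvτ : ∀ᶠ t in nhds τ,
      0 < (t + b + 2) ^ 2 - r ^ 2 ∧ |(t - b) ^ 2 - r ^ 2| < (t + b + 2) ^ 2 - r ^ 2 := by
    have hO : IsOpen {t : ℝ | 0 < (t + b + 2) ^ 2 - r ^ 2 ∧
        |(t - b) ^ 2 - r ^ 2| < (t + b + 2) ^ 2 - r ^ 2} :=
      (isOpen_lt continuous_const hc1).inter (isOpen_lt hc2.abs hc1)
    exact hO.mem_nhds ⟨hpos, habs⟩
  have hEvr : ∀ᶠ x in nhds r,
      0 < (τ + b + 2) ^ 2 - x ^ 2 ∧ |(τ - b) ^ 2 - x ^ 2| < (τ + b + 2) ^ 2 - x ^ 2 := by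
    have hO : IsOpen {x : ℝ | 0 < (τ + b + 2) ^ 2 - x ^ 2 ∧
        |(τ - b) ^ 2 - x ^ 2| < (τ + b + 2) ^ 2 - x ^ 2} :=
      (isOpen_lt continuous_const hc3).inter (isOpen_lt hc4.abs hc3)
    exact hO.mem_nhds ⟨hpos, habs⟩
  rw [show (fun τ'' : ℝ => Eker F m b r τ'') = (fun s : ℝ => ((2 : ℂ) ^ (2 * I * m) * ((1 + b : ℝ) : ℂ) ^ (2 * I * m)) * (((((s + b + 2) ^ 2 - r ^ 2) : ℝ) : ℂ) ^ (-(I * m)) * F (I * m) (I * m) 1 ((((s - b) ^ 2 - r ^ 2) / ((s + b + 2) ^ 2 - r ^ 2) : ℝ) : ℂ))) from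
      funext fun s => by simp only [Eker]; ring,
    show (fun r'' : ℝ => Eker F m b r'' τ) = (fun s : ℝ => ((2 : ℂ) ^ (2 * I * m) * ((1 + b : ℝ) : ℂ) ^ (2 * I * m)) * (((((τ + b + 2) ^ 2 - s ^ 2) : ℝ) : ℂ) ^ (-(I * m)) * F (I * m) (I * m) 1 ((((τ - b) ^ 2 - s ^ 2) / ((τ + b + 2) ^ 2 - s ^ 2) : ℝ) : ℂ))) from
      funext fun s => by simp only [Eker]; ring]
  have hmem0 : ((((τ - b) ^ 2 - r ^ 2) / ((τ + b + 2) ^ 2 - r ^ 2) : ℝ) : ℂ) ∈ Metric.ball (0 : ℂ) 1 := hball _ _ hpos habs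
  have hT3 : deriv (fun s : ℝ => ((2 : ℂ) ^ (2 * I * m) * ((1 + b : ℝ) : ℂ) ^ (2 * I * m)) * (((((s + b + 2) ^ 2 - r ^ 2) : ℝ) : ℂ) ^ (-(I * m)) * F (I * m) (I * m) 1 ((((s - b) ^ 2 - r ^ 2) / ((s + b + 2) ^ 2 - r ^ 2) : ℝ) : ℂ))) τ
      = ((2 : ℂ) ^ (2 * I * m) * ((1 + b : ℝ) : ℂ) ^ (2 * I * m)) * (((τ + b + 2) ^ 2 - r ^ 2 : ℝ) : ℂ) ^ (-(I * m)) * ((-(I * m)) * ((2 * (τ + b + 2) : ℝ) : ℂ) * (((τ + b + 2) ^ 2 - r ^ 2 : ℝ) : ℂ) * F (I * m) (I * m) 1 ((((τ - b) ^ 2 - r ^ 2) / ((τ + b + 2) ^ 2 - r ^ 2) : ℝ) : ℂ) + ((2 * (τ - b) * ((τ + b + 2) ^ 2 - r ^ 2) - ((τ - b) ^ 2 - r ^ 2) * (2 * (τ + b + 2)) : ℝ) : ℂ) * deriv (F (I * m) (I * m) 1) ((((τ - b) ^ 2 - r ^ 2) / ((τ + b + 2) ^ 2 - r ^ 2) :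 ℝ) : ℂ)) / (((τ + b + 2) ^ 2 - r ^ 2 : ℝ) : ℂ) ^ 2 :=
    (aux1 ((2 : ℂ) ^ (2 * I * m) * ((1 + b : ℝ) : ℂ) ^ (2 * I * m)) (I * m) (F (I * m) (I * m) 1) (deriv (F (I * m) (I * m) 1))
      (fun s : ℝ => (s + b + 2) ^ 2 - r ^ 2) (fun s : ℝ => (s - b) ^ 2 - r ^ 2) (2 * (τ + b + 2)) (2 * (τ - b)) τ
      (hgτ τ) (hhτ τ) (hF1at _ hmem0) hpos).deriv
  have hEvD : (fun t : ℝ => deriv (fun s : ℝ => ((2 : ℂ) ^ (2 * I * m) * ((1 + b : ℝ) : ℂ) ^ (2 * I * m)) * (((((s + b + 2) ^ 2 - r ^ 2) : ℝ) : ℂ) ^ (-(I * m)) * F (I * m) (I * m) 1 ((((s - b) ^ 2 - r ^ 2) / ((s + b + 2) ^ 2 - r ^ 2) : ℝ) : ℂ))) t) =ᶠ[nhds τ] (fun t : ℝ => ((2 : ℂ) ^ (2 * I * m) * ((1 + b : ℝ) : ℂ) ^ (2 * I * m)) * (((t + b + 2) ^ 2 - r ^ 2 : ℝ) : ℂ)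 ^ (-(I * m)) * ((-(I * m)) * ((2 * (t + b + 2) : ℝ) : ℂ) * (((t + b + 2) ^ 2 - r ^ 2 : ℝ) : ℂ) * F (I * m) (I * m) 1 ((((t - b) ^ 2 - r ^ 2) / ((t + b + 2) ^ 2 - r ^ 2) : ℝ) : ℂ) + ((2 * (t - b) * ((t + b + 2) ^ 2 - r ^ 2) - ((t - b) ^ 2 - r ^ 2) * (2 * (t + b + 2)) : ℝ) : ℂ) * deriv (F (I * m) (I * m) 1) ((((t - b) ^ 2 - r ^ 2) / ((t + b + 2) ^ 2 - r ^ 2) : ℝ) : ℂ)) / (((t + b + 2) ^ 2 - r ^ 2 : ℝ) : ℂ) ^ 2) := by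
    filter_upwards [hEvτ] with t ht
    exact (aux1 ((2 : ℂ) ^ (2 * I * m) * ((1 + b : ℝ) : ℂ) ^ (2 * I * m)) (I * m) (F (I * m) (I * m) 1) (deriv (F (I * m) (I * m) 1))
      (fun s : ℝ => (s + b + 2) ^ 2 - r ^ 2) (fun s : ℝ => (s - b) ^ 2 - r ^ 2) (2 * (t + b + 2)) (2 * (t - b)) t
      (hgτ t) (hhτ t) (hF1at _ (hball _ _ ht.1 ht.2)) ht.1).deriv
  have hEvDr : (fun x : ℝ => deriv (fun s : ℝ => ((2 : ℂ) ^ (2 * I * m) * ((1 + b : ℝ) : ℂ) ^ (2 * I * m)) * (((((τ + b + 2) ^ 2 - s ^ 2) : ℝ) : ℂ) ^ (-(I * m)) * F (I * m) (I * m) 1 ((((τ - b) ^ 2 - s ^ 2) / ((τ + b + 2) ^ 2 - s ^ 2) : ℝ) : ℂ))) x) =ᶠ[nhds r] (fun t : ℝ => ((2 : ℂ) ^ (2 * I * m) * ((1 + b : ℝ) : ℂ) ^ (2 * I * m)) * (((τ + b + 2) ^ 2 - t ^ 2 : ℝ) : ℂ) ^ (-(I * m)) * ((-(I * m)) * ((-(2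 * t) : ℝ) : ℂ) * (((τ + b + 2) ^ 2 - t ^ 2 : ℝ) : ℂ) * F (I * m) (I * m) 1 ((((τ - b) ^ 2 - t ^ 2) / ((τ + b + 2) ^ 2 - t ^ 2) : ℝ) : ℂ) + ((-(2 * t) * ((τ + b + 2) ^ 2 - t ^ 2) - ((τ - b) ^ 2 - t ^ 2) * (-(2 * t)) : ℝ) : ℂ) * deriv (F (I * m) (I * m) 1) ((((τ - b) ^ 2 - t ^ 2) / ((τ + b + 2) ^ 2 - t ^ 2) : ℝ) : ℂ)) / (((τ + b + 2) ^ 2 - t ^ 2 : ℝ) : ℂ) ^ 2) := by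
    filter_upwards [hEvr] with x hx
    exact (aux1 ((2 : ℂ) ^ (2 * I * m) * ((1 + b : ℝ) : ℂ) ^ (2 * I * m)) (I * m) (F (I * m) (I * m) 1) (deriv (F (I * m) (I * m) 1))
      (fun s : ℝ => (τ + b + 2) ^ 2 - s ^ 2) (fun s : ℝ => (τ - b) ^ 2 - s ^ 2) (-(2 * x)) (-(2 * x)) x
      (hgr x) (hhr x) (hF1at _ (hball _ _ hx.1 hx.2)) hx.1).deriv
  have hT1 : deriv (fun τ' : ℝ => deriv (fun s : ℝ => ((2 : ℂ) ^ (2 * I * m) * ((1 + b : ℝ) : ℂ) ^ (2 * I * m)) * (((((s + b + 2) ^ 2 - r ^ 2) : ℝ) : ℂ) ^ (-(I * m)) * F (I * m) (I * m) 1 ((((s - b) ^ 2 - r ^ 2) / ((s + b + 2) ^ 2 - r ^ 2) : ℝ) : ℂ))) τ') τ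
      = ((2 : ℂ) ^ (2 * I * m) * ((1 + b : ℝ) : ℂ) ^ (2 * I * m)) * (((τ + b + 2) ^ 2 - r ^ 2 : ℝ) : ℂ) ^ (-(I * m)) * (((I * m) * ((I * m) + 1) * ((2 * (τ + b + 2) : ℝ) : ℂ) * ((2 * (τ + b + 2) : ℝ) : ℂ) * (((τ + b + 2) ^ 2 - r ^ 2 : ℝ) : ℂ) ^ 2 - (I * m) * ((2 : ℝ) : ℂ) * (((τ + b + 2) ^ 2 - r ^ 2 : ℝ) : ℂ) ^ 3) * F (I * m) (I * m) 1 ((((τ - b) ^ 2 - r ^ 2) / ((τ + b + 2) ^ 2 - r ^ 2) : ℝ) : ℂ)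
        + ((((2 * ((τ + b + 2) ^ 2 - r ^ 2) - ((τ - b) ^ 2 - r ^ 2) * 2) * ((τ + b + 2) ^ 2 - r ^ 2) - 2 * (2 * (τ + b + 2)) * (2 * (τ - b) * ((τ + b + 2) ^ 2 - r ^ 2) - ((τ - b) ^ 2 - r ^ 2) * (2 * (τ + b + 2))) : ℝ) : ℂ) * (((τ + b + 2) ^ 2 - r ^ 2 : ℝ) : ℂ) - 2 * (I * m) * ((2 * (τ + b + 2) : ℝ) : ℂ) * ((2 * (τ - b) * ((τ + b + 2) ^ 2 - r ^ 2) - ((τ - b) ^ 2 - r ^ 2) * (2 * (τ + b + 2)) : ℝ) : ℂ) * (((τ + b + 2) ^ 2 - r ^ 2 : ℝ) : ℂ)) * deriv (F (I * m) (I * m) 1) ((((τ - b) ^ 2 - r ^ 2) / ((τ + b + 2) ^ 2 - r ^ 2) : ℝ) : ℂ)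
        + ((2 * (τ - b) * ((τ + b + 2) ^ 2 - r ^ 2) - ((τ - b) ^ 2 - r ^ 2) * (2 * (τ + b + 2)) : ℝ) : ℂ) * ((2 * (τ - b) * ((τ + b + 2) ^ 2 - r ^ 2) - ((τ - b) ^ 2 - r ^ 2) * (2 * (τ + b + 2)) : ℝ) : ℂ) * deriv (deriv (F (I * m) (I * m) 1)) ((((τ - b) ^ 2 - r ^ 2) / ((τ + b + 2) ^ 2 - r ^ 2) : ℝ) : ℂ)) / (((τ + b + 2) ^ 2 - r ^ 2 : ℝ) : ℂ) ^ 4 := by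
    have h1 : deriv (fun t : ℝ => deriv (fun s : ℝ => ((2 : ℂ) ^ (2 * I * m) * ((1 + b : ℝ) : ℂ) ^ (2 * I * m)) * (((((s + b + 2) ^ 2 - r ^ 2) : ℝ) : ℂ) ^ (-(I * m)) * F (I * m) (I * m) 1 ((((s - b) ^ 2 - r ^ 2) / ((s + b + 2) ^ 2 - r ^ 2) : ℝ) : ℂ))) t) τ = deriv (fun t : ℝ => ((2 : ℂ) ^ (2 * I * m) * ((1 + b : ℝ) : ℂ) ^ (2 * I * m)) * (((t + b + 2) ^ 2 - r ^ 2 : ℝ) : ℂ) ^ (-(I * m)) * ((-(I * m)) * ((2 * (t + b + 2) : ℝ) : ℂ) * (((t + b + 2) ^ 2 - r ^ 2 : ℝ) : ℂ) * F (I * m) (I * m) 1 ((((t - b) ^ 2 - r ^ 2) / ((t + b + 2) ^ 2 - r ^ 2) : ℝ) : ℂ) + ((2 * (t - b) * ((t + b + 2) ^ 2 - r ^ 2) - ((t - b) ^ 2 - r ^ 2) * (2 * (t + b + 2)) : ℝ) : ℂ) * deriv (F (I * m) (I * m) 1) ((((t - b) ^ 2 - r ^ 2) / ((t + b + 2) ^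 2 - r ^ 2) : ℝ) : ℂ)) / (((t + b + 2) ^ 2 - r ^ 2 : ℝ) : ℂ) ^ 2) τ := hEvD.deriv_eq
    have h2 : deriv (fun t : ℝ => ((2 : ℂ) ^ (2 * I * m) * ((1 + b : ℝ) : ℂ) ^ (2 * I * m)) * (((t + b + 2) ^ 2 - r ^ 2 : ℝ) : ℂ) ^ (-(I * m)) * ((-(I * m)) * ((2 * (t + b + 2) : ℝ) : ℂ) * (((t + b + 2) ^ 2 - r ^ 2 : ℝ) : ℂ) * F (I * m) (I * m) 1 ((((t - b) ^ 2 - r ^ 2) / ((t + b + 2) ^ 2 - r ^ 2) : ℝ) : ℂ) + ((2 * (t - b) * ((t + b + 2) ^ 2 - r ^ 2) - ((t - b) ^ 2 - r ^ 2) * (2 * (t + b + 2)) : ℝ) : ℂ) * deriv (F (I * m) (I * m) 1) ((((t - b) ^ 2 - r ^ 2) / ((t + b + 2) ^ 2 - r ^ 2) : ℝ) : ℂ)) / (((t + b + 2) ^ 2 - r ^ 2 : ℝ) : ℂ) ^ 2) τ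
        = ((2 : ℂ) ^ (2 * I * m) * ((1 + b : ℝ) : ℂ) ^ (2 * I * m)) * (((τ + b + 2) ^ 2 - r ^ 2 : ℝ) : ℂ) ^ (-(I * m)) * (((I * m) * ((I * m) + 1) * ((2 * (τ + b + 2) : ℝ) : ℂ) * ((2 * (τ + b + 2) : ℝ) : ℂ) * (((τ + b + 2) ^ 2 - r ^ 2 : ℝ) : ℂ) ^ 2 - (I * m) * ((2 : ℝ) : ℂ) * (((τ + b + 2) ^ 2 - r ^ 2 : ℝ) : ℂ) ^ 3) * F (I * m) (I * m) 1 ((((τ - b) ^ 2 - r ^ 2) / ((τ + b + 2) ^ 2 - r ^ 2) : ℝ) : ℂ)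
        + ((((2 * ((τ + b + 2) ^ 2 - r ^ 2) - ((τ - b) ^ 2 - r ^ 2) * 2) * ((τ + b + 2) ^ 2 - r ^ 2) - 2 * (2 * (τ + b + 2)) * (2 * (τ - b) * ((τ + b + 2) ^ 2 - r ^ 2) - ((τ - b) ^ 2 - r ^ 2) * (2 * (τ + b + 2))) : ℝ) : ℂ) * (((τ + b + 2) ^ 2 - r ^ 2 : ℝ) : ℂ) - 2 * (I * m) * ((2 * (τ + b + 2) : ℝ) : ℂ) * ((2 * (τ - b) * ((τ + b + 2) ^ 2 - r ^ 2) - ((τ - b) ^ 2 - r ^ 2) * (2 * (τ + b + 2)) : ℝ) : ℂ) * (((τ + b + 2) ^ 2 - r ^ 2 : ℝ) : ℂ)) * deriv (F (I * m) (I * m) 1) ((((τ - b) ^ 2 - r ^ 2) / ((τ + b + 2) ^ 2 - r ^ 2) : ℝ) : ℂ)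
        + ((2 * (τ - b) * ((τ + b + 2) ^ 2 - r ^ 2) - ((τ - b) ^ 2 - r ^ 2) * (2 * (τ + b + 2)) : ℝ) : ℂ) * ((2 * (τ - b) * ((τ + b + 2) ^ 2 - r ^ 2) - ((τ - b) ^ 2 - r ^ 2) * (2 * (τ + b + 2)) : ℝ) : ℂ) * deriv (deriv (F (I * m) (I * m) 1)) ((((τ - b) ^ 2 - r ^ 2) / ((τ + b + 2) ^ 2 - r ^ 2) : ℝ) : ℂ)) / (((τ + b + 2) ^ 2 - r ^ 2 : ℝ) : ℂ) ^ 4 :=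
      (aux2 ((2 : ℂ) ^ (2 * I * m) * ((1 + b : ℝ) : ℂ) ^ (2 * I * m)) (I * m) (F (I * m) (I * m) 1) (deriv (F (I * m) (I * m) 1)) (deriv (deriv (F (I * m) (I * m) 1)))
        (fun s : ℝ => (s + b + 2) ^ 2 - r ^ 2) (fun s : ℝ => (s - b) ^ 2 - r ^ 2)
        (fun s : ℝ => 2 * (s + b + 2)) (fun s : ℝ => 2 * (s - b)) 2 2 τ
        (hgτ τ) (hhτ τ) (hgτ' τ) (hhτ' τ) (hF1at _ hmem0) (hF2at _ hmem0) hpos).deriv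
    exact h1.trans h2
  have hT2 : deriv (fun r' : ℝ => deriv (fun s : ℝ => ((2 : ℂ) ^ (2 * I * m) * ((1 + b : ℝ) : ℂ) ^ (2 * I * m)) * (((((τ + b + 2) ^ 2 - s ^ 2) : ℝ) : ℂ) ^ (-(I * m)) * F (I * m) (I * m) 1 ((((τ - b) ^ 2 - s ^ 2) / ((τ + b + 2) ^ 2 - s ^ 2) : ℝ) : ℂ))) r') r
      = ((2 : ℂ) ^ (2 * I * m) * ((1 + b : ℝ) : ℂ) ^ (2 * I * m)) * (((τ + b + 2) ^ 2 - r ^ 2 : ℝ) : ℂ) ^ (-(I * m)) * (((I * m) * ((I * m) + 1) * ((-(2 * r) : ℝ) : ℂ) * ((-(2 * r) : ℝ) : ℂ) * (((τ + b + 2) ^ 2 - r ^ 2 : ℝ) : ℂ) ^ 2 - (I * m) * (((-2) : ℝ) : ℂ) * (((τ + b + 2) ^ 2 - r ^ 2 : ℝ) : ℂ) ^ 3) * F (I * m) (I * m) 1 ((((τ - b) ^ 2 - r ^ 2) / ((τ + b + 2) ^ 2 - r ^ 2) : ℝ) : ℂ)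
        + (((((-2) * ((τ + b + 2) ^ 2 - r ^ 2) - ((τ - b) ^ 2 - r ^ 2) * (-2)) * ((τ + b + 2) ^ 2 - r ^ 2) - 2 * (-(2 * r)) * (-(2 * r) * ((τ + b + 2) ^ 2 - r ^ 2) - ((τ - b) ^ 2 - r ^ 2) * (-(2 * r))) : ℝ) : ℂ) * (((τ + b + 2) ^ 2 - r ^ 2 : ℝ) : ℂ) - 2 * (I * m) * ((-(2 * r) : ℝ) : ℂ) * ((-(2 * r) * ((τ + b + 2) ^ 2 - r ^ 2) - ((τ - b) ^ 2 - r ^ 2) * (-(2 * r)) : ℝ) : ℂ) * (((τ + b + 2) ^ 2 - r ^ 2 : ℝ) : ℂ)) * deriv (F (I * m) (I * m) 1) ((((τ - b) ^ 2 - r ^ 2) / ((τ + b + 2) ^ 2 - r ^ 2) : ℝ) : ℂ)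
        + ((-(2 * r) * ((τ + b + 2) ^ 2 - r ^ 2) - ((τ - b) ^ 2 - r ^ 2) * (-(2 * r)) : ℝ) : ℂ) * ((-(2 * r) * ((τ + b + 2) ^ 2 - r ^ 2) - ((τ - b) ^ 2 - r ^ 2) * (-(2 * r)) : ℝ) : ℂ) * deriv (deriv (F (I * m) (I * m) 1)) ((((τ - b) ^ 2 - r ^ 2) / ((τ + b + 2) ^ 2 - r ^ 2) : ℝ) : ℂ)) / (((τ + b + 2) ^ 2 - r ^ 2 : ℝ) : ℂ) ^ 4 := by
    have h1 : deriv (fun x : ℝ => deriv (fun s : ℝ => ((2 : ℂ) ^ (2 * I * m) * ((1 + b : ℝ) : ℂ) ^ (2 * I * m)) * (((((τ + b + 2) ^ 2 - s ^ 2) : ℝ) : ℂ) ^ (-(I * m)) * F (I * m) (I * m) 1 ((((τ - b) ^ 2 - s ^ 2) / ((τ + b + 2) ^ 2 - s ^ 2) : ℝ) : ℂ))) x) r = deriv (fun t : ℝ => ((2 : ℂ) ^ (2 * I * m) * ((1 + b : ℝ) : ℂ) ^ (2 * I * m)) * (((τ + b + 2) ^ 2 - t ^ 2 : ℝ) : ℂ)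 ^ (-(I * m)) * ((-(I * m)) * ((-(2 * t) : ℝ) : ℂ) * (((τ + b + 2) ^ 2 - t ^ 2 : ℝ) : ℂ) * F (I * m) (I * m) 1 ((((τ - b) ^ 2 - t ^ 2) / ((τ + b + 2) ^ 2 - t ^ 2) : ℝ) : ℂ) + ((-(2 * t) * ((τ + b + 2) ^ 2 - t ^ 2) - ((τ - b) ^ 2 - t ^ 2) * (-(2 * t)) : ℝ) : ℂ) * deriv (F (I * m) (I * m) 1) ((((τ - b) ^ 2 - t ^ 2) / ((τ + b + 2) ^ 2 - t ^ 2) : ℝ) : ℂ)) / (((τ + b + 2) ^ 2 - t ^ 2 : ℝ) : ℂ) ^ 2) r := hEvDr.deriv_eq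
    have h2 : deriv (fun t : ℝ => ((2 : ℂ) ^ (2 * I * m) * ((1 + b : ℝ) : ℂ) ^ (2 * I * m)) * (((τ + b + 2) ^ 2 - t ^ 2 : ℝ) : ℂ) ^ (-(I * m)) * ((-(I * m)) * ((-(2 * t) : ℝ) : ℂ) * (((τ + b + 2) ^ 2 - t ^ 2 : ℝ) : ℂ) * F (I * m) (I * m) 1 ((((τ - b) ^ 2 - t ^ 2) / ((τ + b + 2) ^ 2 - t ^ 2) : ℝ) : ℂ) + ((-(2 * t) * ((τ + b + 2) ^ 2 - t ^ 2) - ((τ - b) ^ 2 - t ^ 2) * (-(2 * t)) : ℝ) : ℂ) * deriv (F (I * m) (I * m) 1) ((((τ - b) ^ 2 - t ^ 2) / ((τ + b + 2) ^ 2 - t ^ 2) : ℝ) : ℂ)) / (((τ + b + 2) ^ 2 - t ^ 2 : ℝ) : ℂ) ^ 2) r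
        = ((2 : ℂ) ^ (2 * I * m) * ((1 + b : ℝ) : ℂ) ^ (2 * I * m)) * (((τ + b + 2) ^ 2 - r ^ 2 : ℝ) : ℂ) ^ (-(I * m)) * (((I * m) * ((I * m) + 1) * ((-(2 * r) : ℝ) : ℂ) * ((-(2 * r) : ℝ) : ℂ) * (((τ + b + 2) ^ 2 - r ^ 2 : ℝ) : ℂ) ^ 2 - (I * m) * (((-2) : ℝ) : ℂ) * (((τ + b + 2) ^ 2 - r ^ 2 : ℝ) : ℂ) ^ 3) * F (I * m) (I * m) 1 ((((τ - b) ^ 2 - r ^ 2) / ((τ + b + 2) ^ 2 - r ^ 2) : ℝ) : ℂ)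
        + (((((-2) * ((τ + b + 2) ^ 2 - r ^ 2) - ((τ - b) ^ 2 - r ^ 2) * (-2)) * ((τ + b + 2) ^ 2 - r ^ 2) - 2 * (-(2 * r)) * (-(2 * r) * ((τ + b + 2) ^ 2 - r ^ 2) - ((τ - b) ^ 2 - r ^ 2) * (-(2 * r))) : ℝ) : ℂ) * (((τ + b + 2) ^ 2 - r ^ 2 : ℝ) : ℂ) - 2 * (I * m) * ((-(2 * r) : ℝ) : ℂ) * ((-(2 * r) * ((τ + b + 2) ^ 2 - r ^ 2) - ((τ - b) ^ 2 - r ^ 2) * (-(2 * r)) : ℝ) : ℂ) * (((τ + b + 2) ^ 2 - r ^ 2 : ℝ) : ℂ)) * deriv (F (I * m) (I * m) 1) ((((τ - b) ^ 2 - r ^ 2) / ((τ + b + 2) ^ 2 - r ^ 2) : ℝ) : ℂ)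
        + ((-(2 * r) * ((τ + b + 2) ^ 2 - r ^ 2) - ((τ - b) ^ 2 - r ^ 2) * (-(2 * r)) : ℝ) : ℂ) * ((-(2 * r) * ((τ + b + 2) ^ 2 - r ^ 2) - ((τ - b) ^ 2 - r ^ 2) * (-(2 * r)) : ℝ) : ℂ) * deriv (deriv (F (I * m) (I * m) 1)) ((((τ - b) ^ 2 - r ^ 2) / ((τ + b + 2) ^ 2 - r ^ 2) : ℝ) : ℂ)) / (((τ + b + 2) ^ 2 - r ^ 2 : ℝ) : ℂ) ^ 4 :=
      (aux2 ((2 : ℂ) ^ (2 * I * m) * ((1 + b : ℝ) : ℂ) ^ (2 * I * m)) (I * m) (F (I * m) (I * m) 1) (deriv (F (I * m) (I * m) 1)) (deriv (deriv (F (I * m) (I * m) 1)))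
        (fun s : ℝ => (τ + b + 2) ^ 2 - s ^ 2) (fun s : ℝ => (τ - b) ^ 2 - s ^ 2)
        (fun s : ℝ => -(2 * s)) (fun s : ℝ => -(2 * s)) (-2) (-2) r
        (hgr r) (hhr r) (hgr' r) (hgr' r) (hF1at _ hmem0) (hF2at _ hmem0) hpos).deriv
    exact h1.trans h2
  rw [hT1, hT2, hT3]
  have hA0 : (((τ + b + 2) ^ 2 - r ^ 2 : ℝ) : ℂ) ≠ 0 := Complex.ofReal_ne_zero.mpr hpos.ne'
  have htau1 : ((τ : ℂ) + 1) ≠ 0 := by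
    have h1 : ((τ + 1 : ℝ) : ℂ) ≠ 0 := Complex.ofReal_ne_zero.mpr (by linarith)
    push_cast at h1
    exact h1
  have hAcne : (((τ : ℂ) + (b : ℂ) + 2) ^ 2 - (r : ℂ) ^ 2) ≠ 0 := by
    have h1 := hA0
    push_cast at h1
    exact h1
  have h0 := hFode (I * m) (I * m) 1 (((((τ - b) ^ 2 - r ^ 2) / ((τ + b + 2) ^ 2 - r ^ 2) : ℝ) : ℂ)) hmem0
  have h2 : (((τ : ℂ) + (b : ℂ) + 2) ^ 2 - (r : ℂ) ^ 2) * (((((τ - b) ^ 2 - r ^ 2) / ((τ + b + 2) ^ 2 - r ^ 2) : ℝ) : ℂ)) = (((τ : ℂ) - (b : ℂ)) ^ 2 - (r : ℂ) ^ 2) := by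
    push_cast
    field_simp
  have hODE' : (((τ : ℂ) - (b : ℂ)) ^ 2 - (r : ℂ) ^ 2) * ((((τ : ℂ) + (b : ℂ) + 2) ^ 2 - (r : ℂ) ^ 2) - (((τ : ℂ) - (b : ℂ)) ^ 2 - (r : ℂ) ^ 2)) * deriv (deriv (F (I * m) (I * m) 1)) ((((τ - b) ^ 2 - r ^ 2) / ((τ + b + 2) ^ 2 - r ^ 2) : ℝ) : ℂ) + ((((τ : ℂ) + (b : ℂ) + 2) ^ 2 - (r : ℂ) ^ 2) ^ 2 - ((I * m) + (I * m) + 1) * (((τ : ℂ) - (b : ℂ)) ^ 2 - (r : ℂ) ^ 2) * (((τ : ℂ) + (b : ℂ) + 2) ^ 2 - (r : ℂ) ^ 2)) * deriv (F (I * m) (I * m) 1) ((((τ - b) ^ 2 - r ^ 2) / ((τ + b + 2) ^ 2 - r ^ 2) : ℝ) : ℂ) - (I * m) * (I * m) * (((τ : ℂ) + (b : ℂ) + 2) ^ 2 - (r : ℂ) ^ 2) ^ 2 * F (I * m) (I * m) 1 ((((τ - b) ^ 2 - r ^ 2) / ((τ + b + 2) ^ 2 - r ^ 2) : ℝ) :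 ℂ) = 0 := by
    linear_combination ((((τ : ℂ) + (b : ℂ) + 2) ^ 2 - (r : ℂ) ^ 2) ^ 2) * h0
      + (((((τ : ℂ) + (b : ℂ) + 2) ^ 2 - (r : ℂ) ^ 2) * (((((τ - b) ^ 2 - r ^ 2) / ((τ + b + 2) ^ 2 - r ^ 2) : ℝ) : ℂ)) - (((τ : ℂ) + (b : ℂ) + 2) ^ 2 - (r : ℂ) ^ 2) + (((τ : ℂ) - (b : ℂ)) ^ 2 - (r : ℂ) ^ 2)) * deriv (deriv (F (I * m) (I * m) 1)) ((((τ - b) ^ 2 - r ^ 2) / ((τ + b + 2) ^ 2 - r ^ 2) : ℝ) : ℂ)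
        + ((I * m) + (I * m) + 1) * (((τ : ℂ) + (b : ℂ) + 2) ^ 2 - (r : ℂ) ^ 2) * deriv (F (I * m) (I * m) 1) ((((τ - b) ^ 2 - r ^ 2) / ((τ + b + 2) ^ 2 - r ^ 2) : ℝ) : ℂ)) * h2
  rw [frac_combine ((2 : ℂ) ^ (2 * I * m) * ((1 + b : ℝ) : ℂ) ^ (2 * I * m)) ((((τ + b + 2) ^ 2 - r ^ 2 : ℝ) : ℂ) ^ (-(I * m))) I m ((τ : ℂ) + 1) (((τ + b + 2) ^ 2 - r ^ 2 : ℝ) : ℂ)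
      (F (I * m) (I * m) 1 ((((τ - b) ^ 2 - r ^ 2) / ((τ + b + 2) ^ 2 - r ^ 2) : ℝ) : ℂ)) (deriv (F (I * m) (I * m) 1) ((((τ - b) ^ 2 - r ^ 2) / ((τ + b + 2) ^ 2 - r ^ 2) : ℝ) : ℂ)) (deriv (deriv (F (I * m) (I * m) 1)) ((((τ - b) ^ 2 - r ^ 2) / ((τ + b + 2) ^ 2 - r ^ 2) : ℝ) : ℂ))
      (((I * m) * ((I * m) + 1) * ((2 * (τ + b + 2) : ℝ) : ℂ) * ((2 * (τ + b + 2) : ℝ) : ℂ) * (((τ + b + 2) ^ 2 - r ^ 2 : ℝ) : ℂ) ^ 2 - (I * m) * ((2 : ℝ) : ℂ) * (((τ + b + 2) ^ 2 - r ^ 2 : ℝ) : ℂ) ^ 3))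
      (((((2 * ((τ + b + 2) ^ 2 - r ^ 2) - ((τ - b) ^ 2 - r ^ 2) * 2) * ((τ + b + 2) ^ 2 - r ^ 2) - 2 * (2 * (τ + b + 2)) * (2 * (τ - b) * ((τ + b + 2) ^ 2 - r ^ 2) - ((τ - b) ^ 2 - r ^ 2) * (2 * (τ + b + 2))) : ℝ) : ℂ) * (((τ + b + 2) ^ 2 - r ^ 2 : ℝ) : ℂ) - 2 * (I * m) * ((2 * (τ + b + 2) : ℝ) : ℂ) * ((2 * (τ - b) * ((τ + b + 2) ^ 2 - r ^ 2) - ((τ - b) ^ 2 - r ^ 2) * (2 * (τ + b + 2)) : ℝ) : ℂ) * (((τ + b + 2) ^ 2 - r ^ 2 : ℝ) : ℂ)))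
      (((2 * (τ - b) * ((τ + b + 2) ^ 2 - r ^ 2) - ((τ - b) ^ 2 - r ^ 2) * (2 * (τ + b + 2)) : ℝ) : ℂ) * ((2 * (τ - b) * ((τ + b + 2) ^ 2 - r ^ 2) - ((τ - b) ^ 2 - r ^ 2) * (2 * (τ + b + 2)) : ℝ) : ℂ))
      (((I * m) * ((I * m) + 1) * ((-(2 * r) : ℝ) : ℂ) * ((-(2 * r) : ℝ) : ℂ) * (((τ + b + 2) ^ 2 - r ^ 2 : ℝ) : ℂ) ^ 2 - (I * m) * (((-2) : ℝ) : ℂ) * (((τ + b + 2) ^ 2 - r ^ 2 : ℝ) : ℂ) ^ 3))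
      ((((((-2) * ((τ + b + 2) ^ 2 - r ^ 2) - ((τ - b) ^ 2 - r ^ 2) * (-2)) * ((τ + b + 2) ^ 2 - r ^ 2) - 2 * (-(2 * r)) * (-(2 * r) * ((τ + b + 2) ^ 2 - r ^ 2) - ((τ - b) ^ 2 - r ^ 2) * (-(2 * r))) : ℝ) : ℂ) * (((τ + b + 2) ^ 2 - r ^ 2 : ℝ) : ℂ) - 2 * (I * m) * ((-(2 * r) : ℝ) : ℂ) * ((-(2 * r) * ((τ + b + 2) ^ 2 - r ^ 2) - ((τ - b) ^ 2 - r ^ 2) * (-(2 * r)) : ℝ) : ℂ) * (((τ + b + 2) ^ 2 - r ^ 2 : ℝ) : ℂ)))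
      (((-(2 * r) * ((τ + b + 2) ^ 2 - r ^ 2) - ((τ - b) ^ 2 - r ^ 2) * (-(2 * r)) : ℝ) : ℂ) * ((-(2 * r) * ((τ + b + 2) ^ 2 - r ^ 2) - ((τ - b) ^ 2 - r ^ 2) * (-(2 * r)) : ℝ) : ℂ))
      ((-(I * m)) * ((2 * (τ + b + 2) : ℝ) : ℂ) * (((τ + b + 2) ^ 2 - r ^ 2 : ℝ) : ℂ))
      (((2 * (τ - b) * ((τ + b + 2) ^ 2 - r ^ 2) - ((τ - b) ^ 2 - r ^ 2) * (2 * (τ + b + 2)) : ℝ) : ℂ))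
      hA0 htau1]
  push_cast at hODE' ⊢
  linear_combination (2 * (2 * (b : ℂ) + 2) * (((τ : ℂ) + (b : ℂ) + 2) ^ 2 - (r : ℂ) ^ 2) * ((2 : ℂ) ^ (2 * I * m) * (1 + (b : ℂ)) ^ (2 * I * m)) * ((((τ : ℂ) + (b : ℂ) + 2) ^ 2 - (r : ℂ) ^ 2) ^ (-(I * m))) / (((((τ : ℂ) + (b : ℂ) + 2) ^ 2 - (r : ℂ) ^ 2)) ^ 4 * ((τ : ℂ) + 1))) * hODE'
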